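/- Let r ≥ 1 be an integer, let G be a connected subcubic simple graph containing at least one vertex of degree 3, and let h be a locally surjective homomorphism from the r-subdivision G^r to the r-subdivision K_4^r. Then for every vertex v of G^r, h(v) is a branch vertex of K_4^r if and only if v is a branch vertex of G^r. -/

import Mathlib

/-- Representatives of internal vertices of the `k`-subdivision of `G`:
a dart `d` of `G` together with a position `i : Fin k`; the pair `(d, i)` is
identified with `(d.symm, k - 1 - i)`. -/
def SubdivRep {V : Type*} (G : SimpleGraph V) (k : ℕ) :
    G.Dart × Fin k → G.Dart × Fin k → Prop :=
  fun a b => b.1 = a.1.symm ∧ (b.2 : ℕ) = k - 1 - (a.2 : ℕ)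

/-- Internal vertices of the `k`-subdivision of `G`. -/
abbrev SubdivInternal {V : Type*} (G : SimpleGraph V) (k : ℕ) :=
  Quot (SubdivRep G k)

/-- Vertices of the `k`-subdivision of `G`: the branch vertices (`Sum.inl`)
are the original vertices of `G`, and `Sum.inr` are the internal vertices. -/
abbrev SubdivVertex {V : Type*} (G : SimpleGraph V) (k : ℕ) :=
  V ⊕ SubdivInternal G k

/-- One-directional adjacency for the `k`-subdivision: a branch vertex `u` is
adjacent to the first internal vertex of any edge of `G` leaving `u` (via the
identification, also to the last internal vertex of any edge entering `u`),
and consecutive internal vertices on a subdivided edge are adjacent. -/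
def SubdivAdjBase {V : Type*} (G : SimpleGraph V) (k : ℕ) :
    SubdivVertex G k → SubdivVertex G k → Prop
  | Sum.inl u, Sum.inr x =>
      ∃ (d : G.Dart) (i : Fin k), (i : ℕ) = 0 ∧ d.toProd.1 = u ∧
        x = Quot.mk (SubdivRep G k) (d, i)
  | Sum.inr x, Sum.inr y =>
      ∃ (d : G.Dart) (i j : Fin k), (j : ℕ) = (i : ℕ) + 1 ∧
        x = Quot.mk (SubdivRep G k) (d, i) ∧ y = Quot.mk (SubdivRep G k) (d, j)
  | _, _ => False

/-- The `k`-subdivision of a simple graph `G`: every edge `uv` of `G` is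
replaced by a path from `u` to `v` through `k` new internal vertices. -/
def Subdivision {V : Type*} (G : SimpleGraph V) (k : ℕ) :
    SimpleGraph (SubdivVertex G k) where
  Adj x y := x ≠ y ∧ (SubdivAdjBase G k x y ∨ SubdivAdjBase G k y x)
  symm := ⟨fun x y h => ⟨Ne.symm h.1, h.2.symm⟩⟩
  loopless := ⟨fun x h => h.1 rfl⟩

/-- A homomorphism `f : G →g H` is locally bijective if for every vertex `u`
the restriction of `f` to the open neighbourhood of `u`, viewed as a map into
the open neighbourhood of `f u`, is a bijection. -/
def GraphHomLocallyBijective {V W : Type*} {G : SimpleGraph V} {H : SimpleGraph W}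
    (f : G →g H) : Prop :=
  ∀ u : V, Set.BijOn f (G.neighborSet u) (H.neighborSet (f u))

/-- A homomorphism `f : G →g H` is locally surjective if for every vertex `u`
the restriction of `f` to the open neighbourhood of `u`, viewed as a map into
the open neighbourhood of `f u`, is surjective. -/
def GraphHomLocallySurjective {V W : Type*} {G : SimpleGraph V} {H : SimpleGraph W}
    (f : G →g H) : Prop :=
  ∀ u : V, Set.SurjOn f (G.neighborSet u) (H.neighborSet (f u))

/-- A homomorphism `f : G →g H` is locally injective if for every vertex `u`
the restriction of `f` to the open neighbourhood of `u`, viewed as a map into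
the open neighbourhood of `f u`, is injective. -/
def GraphHomLocallyInjective {V W : Type*} {G : SimpleGraph V} {H : SimpleGraph W}
    (f : G →g H) : Prop :=
  ∀ u : V, Set.InjOn f (G.neighborSet u)

section SubdivAux

variable {W : Type*} {H : SimpleGraph W} {r : ℕ}

theorem subdivRep_quot_eq {a b : H.Dart × Fin r} :
    Quot.mk (SubdivRep H r) a = Quot.mk (SubdivRep H r) b ↔
      a = b ∨ SubdivRep H r a b := by
  constructor
  · intro hab
    have hgen := Quot.eq.mp hab
    clear hab
    induction hgen with
    | rel x y hxy => exact Or.inr hxy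
    | refl x => exact Or.inl rfl
    | symm x y _ ih =>
      rcases ih with rfl | ⟨h1, h2⟩
      · exact Or.inl rfl
      · refine Or.inr ⟨by rw [h1, SimpleGraph.Dart.symm_symm], ?_⟩
        have hx := x.2.isLt
        have hy := y.2.isLt
        omega
    | trans x y z _ _ ih1 ih2 =>
      rcases ih1 with rfl | ⟨h1, h2⟩
      · exact ih2
      · rcases ih2 with rfl | ⟨h3, h4⟩
        · exact Or.inr ⟨h1, h2⟩
        · refine Or.inl (Prod.ext_iff.mpr ⟨?_, ?_⟩)
          · rw [h3, h1, SimpleGraph.Dart.symm_symm]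
          · have hx := x.2.isLt
            exact (Fin.ext (by omega)).symm
  · rintro (rfl | hab)
    · rfl
    · exact Quot.sound hab

/-- The vertex preceding internal vertex `(d, i)` on the subdivided edge. -/
def prevV (d : H.Dart) (i : Fin r) : SubdivVertex H r :=
  if h0 : (i : ℕ) = 0 then Sum.inl d.toProd.1
  else Sum.inr (Quot.mk (SubdivRep H r) (d, ⟨(i : ℕ) - 1, by have := i.isLt; omega⟩))

/-- The vertex following internal vertex `(d, i)` on the subdivided edge. -/
def nextV (d : H.Dart) (i : Fin r) : SubdivVertex H r :=
  if h1 : (i : ℕ) = r - 1 then Sum.inl d.toProd.2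
  else Sum.inr (Quot.mk (SubdivRep H r) (d, ⟨(i : ℕ) + 1, by have := i.isLt; omega⟩))

theorem quot_symm {d : H.Dart} {i j : Fin r} (hj : (j : ℕ) = r - 1 - (i : ℕ)) :
    Quot.mk (SubdivRep H r) (d, i) = Quot.mk (SubdivRep H r) (d.symm, j) :=
  Quot.sound ⟨rfl, hj⟩

theorem inr_quot_congr {d : H.Dart} {m m' : ℕ} (hm : m < r) (hm' : m' < r) (he : m = m') :
    (Sum.inr (Quot.mk (SubdivRep H r) (d, ⟨m, hm⟩)) : SubdivVertex H r) =
    Sum.inr (Quot.mk (SubdivRep H r) (d, ⟨m', hm'⟩)) := by subst he; rfl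

theorem prevV_symm {d : H.Dart} {i j : Fin r} (hj : (j : ℕ) = r - 1 - (i : ℕ)) :
    prevV d i = nextV d.symm j := by
  have hi := i.isLt
  have hjl := j.isLt
  by_cases h0 : (i : ℕ) = 0
  · rw [prevV, dif_pos h0, nextV, dif_pos (by omega)]
    rfl
  · rw [prevV, dif_neg h0, nextV, dif_neg (by omega)]
    exact congrArg Sum.inr
      (quot_symm (show (j : ℕ) + 1 = r - 1 - ((i : ℕ) - 1) by omega))

theorem nextV_symm {d : H.Dart} {i j : Fin r} (hj : (j : ℕ) = r - 1 - (i : ℕ)) :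
    nextV d i = prevV d.symm j := by
  have hi := i.isLt
  have hjl := j.isLt
  rw [prevV_symm (show (i : ℕ) = r - 1 - (j : ℕ) by omega), SimpleGraph.Dart.symm_symm]

theorem adj_prevV (d : H.Dart) (i : Fin r) :
    (Subdivision H r).Adj (prevV d i) (Sum.inr (Quot.mk (SubdivRep H r) (d, i))) := by
  have hi := i.isLt
  by_cases h0 : (i : ℕ) = 0
  · rw [prevV, dif_pos h0]
    exact ⟨by simp, Or.inl ⟨d, i, h0, rfl, rfl⟩⟩
  · rw [prevV, dif_neg h0]
    refine ⟨?_, Or.inl ⟨d, ⟨(i : ℕ) - 1, by omega⟩, i, by simp; omega, rfl, rfl⟩⟩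
    intro hcon
    simp only [Sum.inr.injEq] at hcon
    rcases subdivRep_quot_eq.mp hcon with heq | ⟨hh1, hh2⟩
    · have := congrArg (fun p => (p.2 : ℕ)) heq
      simp at this
      omega
    · exact SimpleGraph.Dart.symm_ne d hh1.symm

theorem adj_nextV (d : H.Dart) (i : Fin r) :
    (Subdivision H r).Adj (nextV d i) (Sum.inr (Quot.mk (SubdivRep H r) (d, i))) := by
  have hi := i.isLt
  by_cases h1 : (i : ℕ) = r - 1
  · rw [nextV, dif_pos h1]
    exact ⟨by simp, Or.inl ⟨d.symm, ⟨0, by omega⟩, rfl, rfl, quot_symm (show (0:ℕ) = r - 1 - (i:ℕ) by omega)⟩⟩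
  · rw [nextV, dif_neg h1]
    refine ⟨?_, Or.inr ⟨d, i, ⟨(i : ℕ) + 1, by omega⟩, rfl, rfl, rfl⟩⟩
    intro hcon
    simp only [Sum.inr.injEq] at hcon
    rcases subdivRep_quot_eq.mp hcon with heq | ⟨hh1, hh2⟩
    · have := congrArg (fun p => (p.2 : ℕ)) heq
      simp at this
    · exact SimpleGraph.Dart.symm_ne d hh1.symm

theorem prevV_ne_nextV (d : H.Dart) (i : Fin r) : prevV d i ≠ nextV d i := by
  have hi := i.isLt
  by_cases h0 : (i : ℕ) = 0 <;> by_cases h1 : (i : ℕ) = r - 1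
  · rw [prevV, dif_pos h0, nextV, dif_pos h1]
    intro hc
    simp only [Sum.inl.injEq] at hc
    exact d.fst_ne_snd hc
  · rw [prevV, dif_pos h0, nextV, dif_neg h1]
    simp
  · rw [prevV, dif_neg h0, nextV, dif_pos h1]
    simp
  · rw [prevV, dif_neg h0, nextV, dif_neg h1]
    intro hc
    simp only [Sum.inr.injEq] at hc
    rcases subdivRep_quot_eq.mp hc with heq | ⟨hh1, hh2⟩
    · have := congrArg (fun p => (p.2 : ℕ)) heq
      simp at this
    · exact SimpleGraph.Dart.symm_ne d hh1.symm

theorem adj_internal_cases {d : H.Dart} {i : Fin r} {y : SubdivVertex H r}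
    (hy : (Subdivision H r).Adj (Sum.inr (Quot.mk (SubdivRep H r) (d, i))) y) :
    y = prevV d i ∨ y = nextV d i := by
  have hi := i.isLt
  obtain ⟨hne, hb | hb⟩ := hy
  · cases y with
    | inl u => simp only [SubdivAdjBase] at hb
    | inr z =>
      simp only [SubdivAdjBase] at hb
      obtain ⟨e, a, b, hb1, hxz, hyz⟩ := hb
      have hbl := b.isLt
      have hal := a.isLt
      rcases subdivRep_quot_eq.mp hxz with heq | ⟨h1, h2⟩
      · injection heq with he ha
        subst he
        have ha' : (i : ℕ) = (a : ℕ) := by rw [ha]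
        right
        rw [nextV, dif_neg (show ¬(i : ℕ) = r - 1 by omega)]
        have hb' : b = (⟨(i : ℕ) + 1, by omega⟩ : Fin r) :=
          Fin.ext (show (b : ℕ) = (i : ℕ) + 1 by omega)
        rw [hyz]
        exact congrArg (fun t : Fin r => Sum.inr (Quot.mk (SubdivRep H r) (d, t))) hb'
      · have h1' : e = d.symm := h1
        subst h1'
        have h2' : (a : ℕ) = r - 1 - (i : ℕ) := h2
        left
        rw [prevV, dif_neg (show ¬(i : ℕ) = 0 by omega)]
        rw [hyz]
        exact congrArg Sum.inr
          (quot_symm (show (b : ℕ) = r - 1 - ((i : ℕ) - 1) by omega)).symm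
  · cases y with
    | inl u =>
      simp only [SubdivAdjBase] at hb
      obtain ⟨e, j0, hj0, hu, hq⟩ := hb
      rcases subdivRep_quot_eq.mp hq with heq | ⟨h1, h2⟩
      · injection heq with he ha
        subst he
        subst hu
        left
        rw [prevV, dif_pos (show (i : ℕ) = 0 by rw [ha]; exact hj0)]
      · have h1' : e = d.symm := h1
        subst h1'
        have h2' : (j0 : ℕ) = r - 1 - (i : ℕ) := h2
        right
        rw [nextV, dif_pos (show (i : ℕ) = r - 1 by omega)]
        rw [← hu]
        rfl
    | inr z =>
      simp only [SubdivAdjBase] at hb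
      obtain ⟨e, a, b, hb1, hyz, hq⟩ := hb
      have hbl := b.isLt
      have hal := a.isLt
      rcases subdivRep_quot_eq.mp hq with heq | ⟨h1, h2⟩
      · injection heq with he hab
        subst he
        have hab' : (i : ℕ) = (b : ℕ) := by rw [hab]
        left
        rw [prevV, dif_neg (show ¬(i : ℕ) = 0 by omega)]
        have ha' : a = (⟨(i : ℕ) - 1, by omega⟩ : Fin r) :=
          Fin.ext (show (a : ℕ) = (i : ℕ) - 1 by omega)
        rw [hyz]
        exact congrArg (fun t : Fin r => Sum.inr (Quot.mk (SubdivRep H r) (d, t))) ha'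
      · have h1' : e = d.symm := h1
        subst h1'
        have h2' : (b : ℕ) = r - 1 - (i : ℕ) := h2
        right
        rw [nextV, dif_neg (show ¬(i : ℕ) = r - 1 by omega)]
        rw [hyz]
        exact congrArg Sum.inr
          (quot_symm (show (a : ℕ) = r - 1 - ((i : ℕ) + 1) by omega)).symm

/-- The vertices along the subdivided edge corresponding to dart `d0`
starting at `u = d0.toProd.1`. -/
def svFun {V : Type*} {G : SimpleGraph V} {r : ℕ} (u : V) (d0 : G.Dart) (k : ℕ) :
    SubdivVertex G r :=
  if h1 : k = 0 then Sum.inl u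
  else if h2 : k ≤ r then Sum.inr (Quot.mk (SubdivRep G r) (d0, ⟨k - 1, by omega⟩))
  else Sum.inl d0.toProd.2

theorem svFun_zero {V : Type*} {G : SimpleGraph V} {r : ℕ} (u : V) (d0 : G.Dart) :
    svFun (r := r) u d0 0 = Sum.inl u := by simp [svFun]

theorem svFun_mid {V : Type*} {G : SimpleGraph V} {r : ℕ} (u : V) (d0 : G.Dart)
    {k m : ℕ} (hk1 : 1 ≤ k) (hk2 : k ≤ r) (hm : m = k - 1) (hmlt : m < r) :
    svFun (r := r) u d0 k = Sum.inr (Quot.mk (SubdivRep G r) (d0, ⟨m, hmlt⟩)) := by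
  subst hm
  rw [svFun, dif_neg (by omega), dif_pos hk2]

theorem svFun_big {V : Type*} {G : SimpleGraph V} {r : ℕ} (u : V) (d0 : G.Dart)
    {k : ℕ} (h2 : ¬ k ≤ r) : svFun (r := r) u d0 k = Sum.inl d0.toProd.2 := by
  rw [svFun, dif_neg (by omega), dif_neg h2]

theorem svFun_top {V : Type*} {G : SimpleGraph V} {r : ℕ} (u : V) (d0 : G.Dart) :
    svFun (r := r) u d0 (r + 1) = Sum.inl d0.toProd.2 := by
  rw [svFun, dif_neg (by omega), dif_neg (by omega)]


theorem prevV_eq_inl {d : H.Dart} {i : Fin r} (h0 : (i : ℕ) = 0) :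
    prevV d i = Sum.inl d.toProd.1 := by rw [prevV, dif_pos h0]

theorem prevV_eq_inr {d : H.Dart} {i : Fin r} (h0 : ¬(i : ℕ) = 0) {m : ℕ} (hm : m < r)
    (hmv : m = (i : ℕ) - 1) :
    prevV d i = Sum.inr (Quot.mk (SubdivRep H r) (d, ⟨m, hm⟩)) := by
  subst hmv; rw [prevV, dif_neg h0]

theorem nextV_eq_inl {d : H.Dart} {i : Fin r} (h1 : (i : ℕ) = r - 1) :
    nextV d i = Sum.inl d.toProd.2 := by rw [nextV, dif_pos h1]

theorem nextV_eq_inr {d : H.Dart} {i : Fin r} (h1 : ¬(i : ℕ) = r - 1) {m : ℕ} (hm : m < r)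
    (hmv : m = (i : ℕ) + 1) :
    nextV d i = Sum.inr (Quot.mk (SubdivRep H r) (d, ⟨m, hm⟩)) := by
  subst hmv; rw [nextV, dif_neg h1]

end SubdivAux

/-- Let `r ≥ 1`, let `G` be a connected subcubic graph with a vertex of degree
3, and let `h` be a locally surjective homomorphism from `G^r` to `K₄^r`.
Then `h v` is a branch vertex of `K₄^r` if and only if `v` is a branch vertex
of `G^r`. -/
theorem statement6 {V : Type*} [Fintype V] (G : SimpleGraph V)
    [DecidableRel G.Adj] (r : ℕ) (hr : 1 ≤ r) (hconn : G.Connected)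
    (hcubic : ∀ v : V, G.degree v ≤ 3) (hdeg3 : ∃ v : V, G.degree v = 3)
    (h : Subdivision G r →g Subdivision (SimpleGraph.completeGraph (Fin 4)) r)
    (hsurj : GraphHomLocallySurjective h) :
    ∀ v : SubdivVertex G r,
      (∃ w : Fin 4, h v = Sum.inl w) ↔ (∃ u : V, v = Sum.inl u) := by
  -- Part 1: internal vertices map to internal vertices.
  have lemA0 : ∀ (q : G.Dart × Fin r) (w : Fin 4),
      h (Sum.inr (Quot.mk (SubdivRep G r) q)) ≠ Sum.inl w := by
    rintro ⟨d, i⟩ w hcon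
    have hfin : ∀ c : Fin 4, c ≠ 0 → ∀ w' : Fin 4, w' ≠ w' + c := by decide
    have hcanc : ∀ a b w' : Fin 4, w' + a = w' + b → a = b := by decide
    have key : ∀ (e : (SimpleGraph.completeGraph (Fin 4)).Dart), e.toProd.1 = w →
        ∃ p, (Subdivision G r).Adj (Sum.inr (Quot.mk (SubdivRep G r) (d, i))) p ∧
          h p = Sum.inr (Quot.mk (SubdivRep (SimpleGraph.completeGraph (Fin 4)) r) (e, ⟨0, hr⟩)) := by
      intro e he
      have hadj : (Subdivision (SimpleGraph.completeGraph (Fin 4)) r).Adj (Sum.inl w)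
          (Sum.inr (Quot.mk (SubdivRep (SimpleGraph.completeGraph (Fin 4)) r) (e, ⟨0, hr⟩))) :=
        ⟨by simp, Or.inl ⟨e, ⟨0, hr⟩, rfl, he, rfl⟩⟩
      have hmem : (Sum.inr (Quot.mk (SubdivRep (SimpleGraph.completeGraph (Fin 4)) r) (e, ⟨0, hr⟩)) :
          SubdivVertex (SimpleGraph.completeGraph (Fin 4)) r) ∈
          (Subdivision (SimpleGraph.completeGraph (Fin 4)) r).neighborSet
            (h (Sum.inr (Quot.mk (SubdivRep G r) (d, i)))) := by
        rw [hcon]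
        exact hadj
      obtain ⟨p, hp1, hp2⟩ := hsurj _ hmem
      exact ⟨p, hp1, hp2⟩
    obtain ⟨p1, hp1, he1⟩ := key ⟨(w, w + 1), hfin 1 (by decide) w⟩ rfl
    obtain ⟨p2, hp2, he2⟩ := key ⟨(w, w + 2), hfin 2 (by decide) w⟩ rfl
    obtain ⟨p3, hp3, he3⟩ := key ⟨(w, w + 3), hfin 3 (by decide) w⟩ rfl
    have tdist : ∀ (c c' : Fin 4) (hc : c ≠ 0) (hc' : c' ≠ 0), c ≠ c' →
        (Sum.inr (Quot.mk (SubdivRep (SimpleGraph.completeGraph (Fin 4)) r)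
            (⟨(w, w + c), hfin c hc w⟩, ⟨0, hr⟩)) :
          SubdivVertex (SimpleGraph.completeGraph (Fin 4)) r) ≠
        Sum.inr (Quot.mk (SubdivRep (SimpleGraph.completeGraph (Fin 4)) r)
            (⟨(w, w + c'), hfin c' hc' w⟩, ⟨0, hr⟩)) := by
      intro c c' hc hc' hcc heq
      simp only [Sum.inr.injEq] at heq
      rcases subdivRep_quot_eq.mp heq with heq2 | ⟨hh1, hh2⟩
      · have hval : w + c = w + c' := by
          have h2 := congrArg
            (fun q : (SimpleGraph.completeGraph (Fin 4)).Dart × Fin r => q.1.toProd.2) heq2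
          simpa using h2
        exact hcc (hcanc _ _ _ hval)
      · have hval : w = w + c := by
          have h2 := congrArg
            (fun dd : (SimpleGraph.completeGraph (Fin 4)).Dart => dd.toProd.1) hh1
          simpa using h2
        exact hfin c hc w hval
    have hpp : p1 = p2 ∨ p1 = p3 ∨ p2 = p3 := by
      rcases adj_internal_cases hp1 with h1 | h1 <;>
        rcases adj_internal_cases hp2 with h2 | h2 <;>
          rcases adj_internal_cases hp3 with h3 | h3 <;> simp [h1, h2, h3]
    rcases hpp with hpp | hpp | hpp
    · have hq : h p1 = h p2 := congrArg h hpp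
      rw [he1, he2] at hq
      exact tdist 1 2 (by decide) (by decide) (by decide) hq
    · have hq : h p1 = h p3 := congrArg h hpp
      rw [he1, he3] at hq
      exact tdist 1 3 (by decide) (by decide) (by decide) hq
    · have hq : h p2 = h p3 := congrArg h hpp
      rw [he2, he3] at hq
      exact tdist 2 3 (by decide) (by decide) (by decide) hq
  have lemA : ∀ (x : SubdivInternal G r) (w : Fin 4), h (Sum.inr x) ≠ Sum.inl w :=
    fun x => Quot.ind (β := fun y => ∀ w : Fin 4, h (Sum.inr y) ≠ Sum.inl w) lemA0 x
  -- every vertex of `G` is the tail of some dart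
  have hdart : ∀ u : V, ∃ d : G.Dart, d.toProd.1 = u := by
    intro u
    obtain ⟨w3, hw3⟩ := hdeg3
    by_cases hu : u = w3
    · subst hu
      have hpos : 0 < G.degree u := by omega
      obtain ⟨v', hv'⟩ := (G.degree_pos_iff_exists_adj u).mp hpos
      exact ⟨⟨(u, v'), hv'⟩, rfl⟩
    · obtain ⟨p⟩ := hconn.preconnected u w3
      cases p with
      | nil => exact absurd rfl hu
      | cons ha _ => exact ⟨⟨(_, _), ha⟩, rfl⟩
  -- Part 2: branch vertices map to branch vertices.
  have lemB : ∀ u : V, ∃ w : Fin 4, h (Sum.inl u) = Sum.inl w := by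
    intro u
    obtain ⟨d0, hd0⟩ := hdart u
    have hnbr : ∀ k, 1 ≤ k → k ≤ r → ∀ y : SubdivVertex G r,
        (Subdivision G r).Adj (svFun (r := r) u d0 k) y →
        y = svFun (r := r) u d0 (k - 1) ∨ y = svFun (r := r) u d0 (k + 1) := by
      intro k hk1 hk2 y hy
      rw [svFun_mid u d0 hk1 hk2 rfl (by omega)] at hy
      rcases adj_internal_cases hy with rfl | rfl
      · left
        by_cases hk : k = 1
        · subst hk
          rw [prevV_eq_inl (by show (1 : ℕ) - 1 = 0; rfl), svFun_zero, hd0]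
        · rw [prevV_eq_inr (by show ¬(k - 1 = 0); omega) (m := k - 2) (by omega)
            (by show k - 2 = k - 1 - 1; omega),
            svFun_mid u d0 (by omega) (by omega) (show k - 2 = k - 1 - 1 by omega) (by omega)]
      · right
        by_cases hk : k = r
        · rw [nextV_eq_inl (by show k - 1 = r - 1; omega),
            svFun_big u d0 (by omega)]
        · rw [nextV_eq_inr (by show ¬(k - 1 = r - 1); omega) (m := k) (by omega)
            (by show k = k - 1 + 1; omega),
            svFun_mid u d0 (by omega) (by omega) (show k = k + 1 - 1 by omega) (by omega)]
    have hP : ∀ t k, k + t = r → 1 ≤ k →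
        ∃ (e : (SimpleGraph.completeGraph (Fin 4)).Dart) (j : Fin r), (j : ℕ) ≤ k - 1 ∧
          h (svFun (r := r) u d0 k) =
            Sum.inr (Quot.mk (SubdivRep (SimpleGraph.completeGraph (Fin 4)) r) (e, j)) ∧
          h (svFun (r := r) u d0 (k + 1)) = nextV e j := by
      intro t
      induction t with
      | zero =>
        intro k hk0 hk1
        have hkr : r = k := by omega
        subst hkr
        have hadj : (Subdivision G r).Adj (svFun (r := r) u d0 r)
            (svFun (r := r) u d0 (r + 1)) := by
          rw [svFun_mid (m := r - 1) u d0 hk1 (le_refl r) rfl (by omega), svFun_top]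
          have hnv := adj_nextV (H := G) (r := r) d0 ⟨r - 1, by omega⟩
          rw [nextV_eq_inl (by show r - 1 = r - 1; rfl)] at hnv
          exact hnv.symm
        have himg := h.map_adj hadj
        obtain ⟨x, hx⟩ : ∃ x, h (svFun (r := r) u d0 r) = Sum.inr x := by
          rcases hxx : h (svFun (r := r) u d0 r) with w | x
          · rw [svFun_mid (m := r - 1) u d0 hk1 (le_refl r) rfl (by omega)] at hxx
            exact absurd hxx (lemA _ w)
          · exact ⟨x, rfl⟩
        obtain ⟨⟨e0, j0⟩, hrep⟩ := Quot.exists_rep x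
        rw [hx, ← hrep] at himg
        have hj0l := j0.isLt
        rcases adj_internal_cases himg with hcase | hcase
        · refine ⟨e0.symm, ⟨r - 1 - (j0 : ℕ), by omega⟩,
            by show r - 1 - (j0 : ℕ) ≤ r - 1; omega, ?_, ?_⟩
          · rw [hx, ← hrep]
            exact congrArg Sum.inr
              (quot_symm (show r - 1 - (j0 : ℕ) = r - 1 - (j0 : ℕ) from rfl))
          · rw [hcase]
            exact prevV_symm (show r - 1 - (j0 : ℕ) = r - 1 - (j0 : ℕ) from rfl)
        · refine ⟨e0, j0, by omega, ?_, hcase⟩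
          rw [hx]
          exact congrArg Sum.inr hrep.symm
      | succ n ih =>
        intro k hkn hk1
        obtain ⟨e, j, hj, hP1, hP2⟩ := ih (k + 1) (by omega) (by omega)
        have hjl := j.isLt
        have hmem : prevV e j ∈ (Subdivision (SimpleGraph.completeGraph (Fin 4)) r).neighborSet
            (h (svFun (r := r) u d0 (k + 1))) := by
          rw [hP1]
          exact (adj_prevV e j).symm
        obtain ⟨p, hpmem, hpe⟩ := hsurj _ hmem
        rcases hnbr (k + 1) (by omega) (by omega) p hpmem with hpk | hpk
        · simp only [Nat.add_sub_cancel] at hpk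
          subst hpk
          have hjne : ¬((j : ℕ) = 0) := by
            intro h0
            rw [prevV_eq_inl h0] at hpe
            rw [svFun_mid u d0 hk1 (by omega) rfl (by omega)] at hpe
            exact lemA _ _ hpe
          refine ⟨e, ⟨(j : ℕ) - 1, by omega⟩,
            by show (j : ℕ) - 1 ≤ k - 1; omega, ?_, ?_⟩
          · rw [hpe]
            exact prevV_eq_inr hjne (by omega) rfl
          · rw [hP1]
            exact (nextV_eq_inr (i := ⟨(j : ℕ) - 1, by omega⟩)
              (by show ¬((j : ℕ) - 1 = r - 1); omega) (m := (j : ℕ)) (by omega)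
              (by show (j : ℕ) = (j : ℕ) - 1 + 1; omega)).symm
        · subst hpk
          rw [hP2] at hpe
          exact absurd hpe.symm (prevV_ne_nextV e j)
    obtain ⟨e, j, hj, hP1, hP2⟩ := hP (r - 1) 1 (by omega) (le_refl 1)
    have hj0 : (j : ℕ) = 0 := by omega
    have hmem : prevV e j ∈ (Subdivision (SimpleGraph.completeGraph (Fin 4)) r).neighborSet
        (h (svFun (r := r) u d0 1)) := by
      rw [hP1]
      exact (adj_prevV e j).symm
    obtain ⟨p, hpmem, hpe⟩ := hsurj _ hmem
    rcases hnbr 1 (le_refl 1) hr p hpmem with hpk | hpk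
    · rw [show (1 : ℕ) - 1 = 0 from rfl, svFun_zero] at hpk
      subst hpk
      rw [prevV_eq_inl hj0] at hpe
      exact ⟨e.toProd.1, hpe⟩
    · subst hpk
      rw [hP2] at hpe
      exact absurd hpe.symm (prevV_ne_nextV e j)
  -- conclusion
  intro v
  rcases v with u | x
  · exact ⟨fun _ => ⟨u, rfl⟩, fun _ => lemB u⟩
  · constructor
    · rintro ⟨w, hw⟩
      exact absurd hw (lemA x w)
    · rintro ⟨u, hu⟩
      exact absurd hu (by simp)
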